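/- Let 0 = t₀ < t₁ < ⋯ < t_N = T be a partition of [0,T] and set h_k = t_k − t_{k−1} for k = 1,…,N. Let w, v : [0,T] → ℝ be continuous functions that are affine on each subinterval [t_{k−1}, t_k], and let Qv : [0,T] → ℝ denote the piecewise constant function whose value on (t_{k−1}, t_k) is the mean (1/h_k)∫_{t_{k−1}}^{t_k} v(s) ds. Then ∫₀ᵀ w(t)·(Qv)(t) dt = ∫₀ᵀ w(t)·v(t) dt − Σ_{k=1}^{N} (h_k²/12)·∫_{t_{k−1}}^{t_k} w′(t)·v′(t) dt, where w′, v′ denote the (piecewise constant) derivatives of w and v on the open subintervals. -/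

import Mathlib

open MeasureTheory intervalIntegral Set

lemma int_poly (a b c d e : ℝ) :
    ∫ s in a..b, (c + d*s + e*s^2) = c*(b-a) + d*(b^2-a^2)/2 + e*(b^3-a^3)/3 := by
  have h : ∀ x ∈ Set.uIcc a b, HasDerivAt (fun s => c*s + d*s^2/2 + e*s^3/3)
      (c + d*x + e*x^2) x := by
    intro x _
    have h1 : HasDerivAt (fun s : ℝ => c*s) (c*1) x := (hasDerivAt_id x).const_mul c
    have h2 : HasDerivAt (fun s : ℝ => d*s^2/2) (d*(2*x^1)/2) x :=
      ((hasDerivAt_pow 2 x).const_mul d).div_const 2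
    have h3 : HasDerivAt (fun s : ℝ => e*s^3/3) (e*(3*x^2)/3) x :=
      ((hasDerivAt_pow 3 x).const_mul e).div_const 3
    exact ((h1.add h2).add h3).congr_deriv (by ring)
  rw [intervalIntegral.integral_eq_sub_of_hasDerivAt h
    (by apply Continuous.intervalIntegrable; continuity)]
  ring

/-- For a partition `0 = t₀ < t₁ < ⋯ < t_N = T`, continuous functions `w, v` that are affine
on each subinterval, and `Qv` the piecewise constant function equal on each open subinterval
to the mean value of `v` there:
`∫₀ᵀ w·Qv = ∫₀ᵀ w·v − Σₖ (hₖ²/12)·∫ w′·v′` with `hₖ = tₖ − tₖ₋₁`. -/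
theorem piecewise_affine_projection_penalty (T : ℝ) (N : ℕ) (hN : 0 < N)
    (t : ℕ → ℝ) (ht0 : t 0 = 0) (htN : t N = T)
    (hmono : ∀ k < N, t k < t (k + 1))
    (w v Qv : ℝ → ℝ)
    (hwc : ContinuousOn w (Set.Icc 0 T)) (hvc : ContinuousOn v (Set.Icc 0 T))
    (hwaff : ∀ k < N, ∃ c d : ℝ, ∀ s ∈ Set.Icc (t k) (t (k + 1)), w s = c + d * s)
    (hvaff : ∀ k < N, ∃ c d : ℝ, ∀ s ∈ Set.Icc (t k) (t (k + 1)), v s = c + d * s)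
    (hQ : ∀ k < N, ∀ s ∈ Set.Ioo (t k) (t (k + 1)),
        Qv s = (1 / (t (k + 1) - t k)) * ∫ r in (t k)..(t (k + 1)), v r) :
    (∫ s in (0 : ℝ)..T, w s * Qv s)
      = (∫ s in (0 : ℝ)..T, w s * v s)
        - ∑ k ∈ Finset.range N, ((t (k + 1) - t k) ^ 2 / 12) *
            ∫ s in (t k)..(t (k + 1)), deriv w s * deriv v s := by
  -- monotonicity of t on [0, N]
  have hle : ∀ j, j ≤ N → ∀ i ≤ j, t i ≤ t j := by
    intro j
    induction j with
    | zero => intro _ i hi; simp [Nat.le_zero.mp hi]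
    | succ n ih =>
      intro hn1 i hi
      rcases Nat.le_succ_iff.mp hi with h | h
      · exact le_trans (ih (le_trans (Nat.le_succ n) hn1) i h)
          (hmono n (Nat.lt_of_succ_le hn1)).le
      · simp [h]
  have hsub : ∀ k < N, Set.Icc (t k) (t (k+1)) ⊆ Set.Icc 0 T := by
    intro k hk x hx
    constructor
    · rw [← ht0]; exact le_trans (hle k hk.le 0 (Nat.zero_le _)) hx.1
    · rw [← htN]; exact le_trans hx.2 (hle N le_rfl (k+1) hk)
  -- integrability of w*v on each subinterval
  have hwvint : ∀ k < N, IntervalIntegrable (fun s => w s * v s) volume (t k) (t (k+1)) := by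
    intro k hk
    apply ContinuousOn.intervalIntegrable
    rw [Set.uIcc_of_le (hmono k hk).le]
    exact ((hwc.mono (hsub k hk)).mul (hvc.mono (hsub k hk)))
  -- integrability of w*Qv on each subinterval
  have hwQint : ∀ k < N, IntervalIntegrable (fun s => w s * Qv s) volume (t k) (t (k+1)) := by
    intro k hk
    have hab := hmono k hk
    rw [intervalIntegrable_iff_integrableOn_Ioo_of_le hab.le]
    set M := (1 / (t (k + 1) - t k)) * ∫ r in (t k)..(t (k + 1)), v r with hM
    have hbase : IntegrableOn (fun s => w s * M) (Set.Ioo (t k) (t (k+1))) volume :=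
      (((hwc.mono (hsub k hk)).mul continuousOn_const).integrableOn_Icc).mono_set
        Set.Ioo_subset_Icc_self
    exact hbase.congr_fun (fun s hs => by rw [hQ k hk s hs]) measurableSet_Ioo
  -- per-interval identity
  have key : ∀ k < N, (∫ s in (t k)..(t (k+1)), w s * Qv s)
      = (∫ s in (t k)..(t (k+1)), w s * v s)
        - ((t (k + 1) - t k) ^ 2 / 12) * ∫ s in (t k)..(t (k+1)), deriv w s * deriv v s := by
    intro k hk
    obtain ⟨c, d, hw⟩ := hwaff k hk
    obtain ⟨c', d', hv⟩ := hvaff k hk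
    set a := t k with ha
    set b := t (k+1) with hb
    have hab : a < b := hmono k hk
    have hIv : ∫ s in a..b, v s = c'*(b-a) + d'*(b^2-a^2)/2 := by
      rw [intervalIntegral.integral_congr (g := fun s => c' + d'*s + 0*s^2)
        (by intro s hs; rw [Set.uIcc_of_le hab.le] at hs; show v s = _; rw [hv s hs]; ring),
        int_poly]
      ring
    have hwv : ∫ s in a..b, w s * v s
        = c*c'*(b-a) + (c*d'+d*c')*(b^2-a^2)/2 + (d*d')*(b^3-a^3)/3 := by
      rw [intervalIntegral.integral_congr (g := fun s => c*c' + (c*d'+d*c')*s + (d*d')*s^2)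
        (by intro s hs; rw [Set.uIcc_of_le hab.le] at hs; show w s * v s = _; rw [hv s hs, hw s hs]; ring),
        int_poly]
    -- derivative term
    have hd : ∀ s ∈ Set.Ioo a b, deriv w s * deriv v s = d * d' := by
      intro s hs
      have hmem : Set.Ioo a b ∈ nhds s := Ioo_mem_nhds hs.1 hs.2
      have hw' : deriv w s = d := by
        have he : w =ᶠ[nhds s] (fun x => c + d*x) :=
          Filter.eventuallyEq_of_mem hmem (fun x hx => hw x (Set.Ioo_subset_Icc_self hx))
        rw [he.deriv_eq]
        have : HasDerivAt (fun x : ℝ => c + d*x) d s := by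
          simpa using ((hasDerivAt_id s).const_mul d).const_add c
        exact this.deriv
      have hv' : deriv v s = d' := by
        have he : v =ᶠ[nhds s] (fun x => c' + d'*x) :=
          Filter.eventuallyEq_of_mem hmem (fun x hx => hv x (Set.Ioo_subset_Icc_self hx))
        rw [he.deriv_eq]
        have : HasDerivAt (fun x : ℝ => c' + d'*x) d' s := by
          simpa using ((hasDerivAt_id s).const_mul d').const_add c'
        exact this.deriv
      rw [hw', hv']
    have hder : ∫ s in a..b, deriv w s * deriv v s = d * d' * (b - a) := by
      rw [intervalIntegral.integral_of_le hab.le, MeasureTheory.integral_Ioc_eq_integral_Ioo,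
        MeasureTheory.setIntegral_congr_fun measurableSet_Ioo hd,
        MeasureTheory.setIntegral_const]
      rw [Real.volume_real_Ioo_of_le hab.le, smul_eq_mul]
      ring
    -- LHS term
    have hQ' : ∀ s ∈ Set.Ioo a b, w s * Qv s
        = (c + d*s) * ((1/(b-a)) * (c'*(b-a) + d'*(b^2-a^2)/2)) := by
      intro s hs
      rw [hQ k hk s hs, hw s (Set.Ioo_subset_Icc_self hs), ← ha, ← hb, hIv]
    have hwQ : ∫ s in a..b, w s * Qv s
        = ((1/(b-a)) * (c'*(b-a) + d'*(b^2-a^2)/2)) * (c*(b-a) + d*(b^2-a^2)/2) := by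
      rw [intervalIntegral.integral_of_le hab.le, MeasureTheory.integral_Ioc_eq_integral_Ioo,
        MeasureTheory.setIntegral_congr_fun measurableSet_Ioo hQ',
        ← MeasureTheory.integral_Ioc_eq_integral_Ioo, ← intervalIntegral.integral_of_le hab.le]
      rw [intervalIntegral.integral_congr (g := fun s =>
          (c * ((1/(b-a)) * (c'*(b-a) + d'*(b^2-a^2)/2)))
          + (d * ((1/(b-a)) * (c'*(b-a) + d'*(b^2-a^2)/2)))*s + 0*s^2)
        (by intro s _; ring), int_poly]
      ring
    rw [hwQ, hwv, hder]
    have hne : b - a ≠ 0 := by linarith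
    field_simp
    ring
  -- sum up
  have hs1 : ∑ k ∈ Finset.range N, ∫ s in (t k)..(t (k+1)), w s * Qv s
      = ∫ s in (0:ℝ)..T, w s * Qv s := by
    have := intervalIntegral.sum_integral_adjacent_intervals (μ := volume)
      (f := fun s => w s * Qv s) (a := t) (n := N) hwQint
    rwa [ht0, htN] at this
  have hs2 : ∑ k ∈ Finset.range N, ∫ s in (t k)..(t (k+1)), w s * v s
      = ∫ s in (0:ℝ)..T, w s * v s := by
    have := intervalIntegral.sum_integral_adjacent_intervals (μ := volume)
      (f := fun s => w s * v s) (a := t) (n := N) hwvint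
    rwa [ht0, htN] at this
  rw [← hs1, ← hs2, Finset.sum_congr rfl (fun k hk => key k (Finset.mem_range.mp hk)),
    Finset.sum_sub_distrib]
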